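/- If $\beta_{j,1}$, for $j=2,\dots,N$, are independent Beta random variables with parameters $(j,1)$, then the product $\prod_{j=2}^N \beta_{j,1}$ has the Beta distribution with parameters $(2, N-1)$. -/

import Mathlib

open MeasureTheory ProbabilityTheory

/-- The Beta distribution with parameters `a, b`. -/
noncomputable def betaM (a b : ℝ) : Measure ℝ :=
  volume.withDensity fun x =>
    ENNReal.ofReal ((Set.Ioo (0:ℝ) 1).indicator
      (fun x => (Real.Gamma (a + b) / (Real.Gamma a * Real.Gamma b)) *
        x ^ (a - 1) * (1 - x) ^ (b - 1)) x)

open Set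

namespace BetaAux

/-- CDF polynomial of Beta(2,k). -/
noncomputable def G (k : ℕ) (t : ℝ) : ℝ := 1 - (1 - t) ^ k * (1 + k * t)

lemma G_zero (k : ℕ) : G k 0 = 0 := by simp [G]

lemma G_one (k : ℕ) (hk : 1 ≤ k) : G k 1 = 1 := by
  simp [G, zero_pow (by omega : k ≠ 0)]

lemma aux_le_one {k : ℕ} {t : ℝ} (ht : 0 ≤ t) (ht1 : t ≤ 1) :
    (1 - t) ^ k * (1 + k * t) ≤ 1 := by
  have h1 : 1 + (k:ℝ) * t ≤ (1 + t) ^ k := by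
    have := one_add_mul_le_pow (a := t) (by linarith) k
    linarith
  have h2 : (0:ℝ) ≤ 1 - t := by linarith
  calc (1 - t) ^ k * (1 + k * t) ≤ (1 - t) ^ k * (1 + t) ^ k := by
        apply mul_le_mul_of_nonneg_left h1 (by positivity)
    _ = ((1 - t) * (1 + t)) ^ k := (mul_pow _ _ _).symm
    _ = (1 - t ^ 2) ^ k := by ring_nf
    _ ≤ 1 := pow_le_one₀ (by nlinarith) (by nlinarith)

lemma G_nonneg {k : ℕ} {t : ℝ} (ht : 0 ≤ t) (ht1 : t ≤ 1) : 0 ≤ G k t := by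
  have := aux_le_one (k := k) ht ht1
  simp only [G]; linarith

/-- FTC helper for lower integrals on `Ioo`. -/
lemma lintegral_Ioo_of_hasDerivAt {a b : ℝ} (hab : a ≤ b) {f F : ℝ → ℝ}
    (hF : ∀ x ∈ Icc a b, HasDerivAt F (f x) x)
    (hcont : ContinuousOn f (Icc a b))
    (hpos : ∀ x ∈ Icc a b, 0 ≤ f x) :
    ∫⁻ x in Ioo a b, ENNReal.ofReal (f x) = ENNReal.ofReal (F b - F a) := by
  have h1 : volume.restrict (Ioo a b) = volume.restrict (Ioc a b) :=
    Measure.restrict_congr_set Ioo_ae_eq_Ioc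
  have hint : IntegrableOn f (Ioc a b) :=
    (hcont.integrableOn_Icc).mono_set Ioc_subset_Icc_self
  rw [h1, ← ofReal_integral_eq_lintegral_ofReal hint
    (ae_restrict_of_forall_mem measurableSet_Ioc
      (fun x hx => hpos x (Ioc_subset_Icc_self hx)))]
  congr 1
  rw [← intervalIntegral.integral_of_le hab]
  exact intervalIntegral.integral_eq_sub_of_hasDerivAt
    (fun x hx => hF x (by rwa [uIcc_of_le hab] at hx))
    ((hcont.mono (by rw [uIcc_of_le hab])).intervalIntegrable)

lemma measurable_betaDensity (a b : ℝ) :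
    Measurable fun x : ℝ => ENNReal.ofReal ((Set.Ioo (0:ℝ) 1).indicator
      (fun x => (Real.Gamma (a + b) / (Real.Gamma a * Real.Gamma b)) *
        x ^ (a - 1) * (1 - x) ^ (b - 1)) x) := by
  apply ENNReal.measurable_ofReal.comp
  apply Measurable.indicator _ measurableSet_Ioo
  fun_prop

lemma betaM_apply (a b : ℝ) {s : Set ℝ} (hs : MeasurableSet s) :
    betaM a b s = ∫⁻ x in s ∩ Ioo 0 1,
      ENNReal.ofReal ((Real.Gamma (a + b) / (Real.Gamma a * Real.Gamma b)) *
        x ^ (a - 1) * (1 - x) ^ (b - 1)) := by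
  rw [betaM, withDensity_apply _ hs]
  have : ∀ x : ℝ, ENNReal.ofReal ((Set.Ioo (0:ℝ) 1).indicator
      (fun x => (Real.Gamma (a + b) / (Real.Gamma a * Real.Gamma b)) *
        x ^ (a - 1) * (1 - x) ^ (b - 1)) x)
      = (Set.Ioo (0:ℝ) 1).indicator (fun x => ENNReal.ofReal
        ((Real.Gamma (a + b) / (Real.Gamma a * Real.Gamma b)) *
        x ^ (a - 1) * (1 - x) ^ (b - 1))) x := by
    intro x
    by_cases h : x ∈ Set.Ioo (0:ℝ) 1 <;> simp [Set.indicator_apply, h]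
  simp only [this]
  rw [lintegral_indicator measurableSet_Ioo, Measure.restrict_restrict measurableSet_Ioo,
    Set.inter_comm]

/-- The density of `betaM 2 k` on `Ioo 0 1`, `k = m+1`. -/
lemma betaM_two_density (m : ℕ) {x : ℝ} (hx : x ∈ Ioo (0:ℝ) 1) :
    (Real.Gamma (2 + ((m:ℝ)+1)) / (Real.Gamma 2 * Real.Gamma ((m:ℝ)+1))) *
        x ^ ((2:ℝ) - 1) * (1 - x) ^ (((m:ℝ)+1) - 1)
      = ((m:ℝ)+1) * ((m:ℝ)+2) * (x * (1 - x) ^ m) := by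
  have h2 : (2:ℝ) + ((m:ℝ)+1) = ((m+2:ℕ):ℝ) + 1 := by push_cast; ring
  have h3 : ((m:ℝ)+1) = ((m:ℕ):ℝ) + 1 := by push_cast; ring
  rw [h2, Real.Gamma_nat_eq_factorial, h3, Real.Gamma_nat_eq_factorial, Real.Gamma_two,
    show ((2:ℝ)-1) = (1:ℝ) by norm_num, Real.rpow_one,
    show ((((m:ℕ):ℝ)+1)-1) = ((m:ℕ):ℝ) by ring, Real.rpow_natCast]
  rw [show m + 2 = (m+1)+1 by ring, Nat.factorial_succ, Nat.factorial_succ]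
  have hm : (m.factorial : ℝ) ≠ 0 := Nat.cast_ne_zero.2 m.factorial_ne_zero
  field_simp
  push_cast
  ring

lemma betaM_nat_one_density (m : ℕ) {x : ℝ} (hx : x ∈ Ioo (0:ℝ) 1) :
    (Real.Gamma (((m:ℝ)+1) + 1) / (Real.Gamma ((m:ℝ)+1) * Real.Gamma 1)) *
        x ^ (((m:ℝ)+1) - 1) * (1 - x) ^ ((1:ℝ) - 1)
      = ((m:ℝ)+1) * x ^ m := by
  have h3 : ((m:ℝ)+1) = ((m:ℕ):ℝ) + 1 := by push_cast; ring
  rw [h3, Real.Gamma_nat_eq_factorial, show (((m:ℕ):ℝ)+1) + 1 = ((m+1:ℕ):ℝ)+1 by push_cast; ring,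
    Real.Gamma_nat_eq_factorial, Real.Gamma_one,
    show (((m:ℕ):ℝ)+1)-1 = ((m:ℕ):ℝ) by ring, Real.rpow_natCast,
    show ((1:ℝ)-1) = (0:ℝ) by norm_num, Real.rpow_zero, Nat.factorial_succ]
  have hm : (m.factorial : ℝ) ≠ 0 := Nat.cast_ne_zero.2 m.factorial_ne_zero
  field_simp
  push_cast
  ring

/-- CDF values of `betaM (m+1) 1`. -/
lemma betaM_nat_one_Iic (m : ℕ) {t : ℝ} (ht0 : 0 ≤ t) (ht1 : t ≤ 1) :
    betaM ((m:ℝ)+1) 1 (Iic t) = ENNReal.ofReal (t ^ (m+1)) := by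
  rw [betaM_apply _ _ measurableSet_Iic]
  have hset : (Iic t ∩ Ioo 0 1 : Set ℝ) =ᵐ[volume] (Ioo 0 t : Set ℝ) := by
    rw [MeasureTheory.ae_eq_set]
    constructor
    · refine measure_mono_null (fun x hx => ?_) (Real.volume_singleton (a := t))
      simp only [mem_diff, mem_inter_iff, mem_Iic, mem_Ioo, mem_singleton_iff] at *
      rcases hx with ⟨⟨h1, h2, h3⟩, h4⟩
      by_contra h
      exact h4 ⟨h2, lt_of_le_of_ne h1 h⟩
    · refine measure_mono_null (fun x hx => ?_) (measure_empty (μ := volume))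
      simp only [mem_diff, mem_inter_iff, mem_Iic, mem_Ioo, mem_empty_iff_false] at *
      rcases hx with ⟨⟨h1, h2⟩, h3⟩
      exact h3 ⟨h2.le, h1, lt_of_lt_of_le h2 ht1⟩
  rw [Measure.restrict_congr_set hset,
    setLIntegral_congr_fun measurableSet_Ioo
      (fun x hx =>
        congrArg ENNReal.ofReal (betaM_nat_one_density m
          ⟨hx.1, lt_of_lt_of_le hx.2 ht1⟩))]
  rw [lintegral_Ioo_of_hasDerivAt ht0 (F := fun x => x ^ (m+1))
    (fun x _ => by simpa using hasDerivAt_pow (m+1) x)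
    (by fun_prop)
    (fun x hx => by have := hx.1; positivity)]
  rw [zero_pow (by omega : m + 1 ≠ 0), sub_zero]

lemma isProbabilityMeasure_betaM_nat_one (m : ℕ) :
    IsProbabilityMeasure (betaM ((m:ℝ)+1) 1) := by
  constructor
  rw [betaM_apply _ _ MeasurableSet.univ, univ_inter,
    show (Ioo (0:ℝ) 1) = Iic 1 ∩ Ioo 0 1 from
      (inter_eq_right.mpr (fun x (hx : x ∈ Ioo (0:ℝ) 1) => show x ∈ Iic (1:ℝ) from le_of_lt hx.2)).symm,
    ← betaM_apply _ _ measurableSet_Iic,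
    betaM_nat_one_Iic m zero_le_one le_rfl]
  simp

lemma hasDerivAt_G (m : ℕ) (x : ℝ) :
    HasDerivAt (G (m+1)) (((m:ℝ)+1) * ((m:ℝ)+2) * (x * (1 - x) ^ m)) x := by
  have h1 : HasDerivAt (fun y : ℝ => 1 - y) (-1) x := by
    simpa using (hasDerivAt_id x).const_sub 1
  have h2 := h1.pow (m+1)
  have h3 : HasDerivAt (fun y : ℝ => 1 + (((m+1:ℕ)):ℝ) * y) (((m+1:ℕ)):ℝ) x := by
    simpa using ((hasDerivAt_id x).const_mul (((m+1:ℕ)):ℝ)).const_add 1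
  have h4 := (h2.mul h3).const_sub 1
  refine h4.congr_deriv ?_
  simp only [Nat.add_sub_cancel, Pi.pow_apply]
  push_cast
  ring

/-- CDF of `betaM 2 (m+1)` on `[0,1]`. -/
lemma betaM_two_Iic (m : ℕ) {t : ℝ} (ht0 : 0 ≤ t) (ht1 : t ≤ 1) :
    betaM 2 ((m:ℝ)+1) (Iic t) = ENNReal.ofReal (G (m+1) t) := by
  rw [betaM_apply _ _ measurableSet_Iic]
  have hset : (Iic t ∩ Ioo 0 1 : Set ℝ) =ᵐ[volume] (Ioo 0 t : Set ℝ) := by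
    rw [MeasureTheory.ae_eq_set]
    constructor
    · refine measure_mono_null (fun x hx => ?_) (Real.volume_singleton (a := t))
      simp only [mem_diff, mem_inter_iff, mem_Iic, mem_Ioo, mem_singleton_iff] at *
      rcases hx with ⟨⟨h1, h2, h3⟩, h4⟩
      by_contra h
      exact h4 ⟨h2, lt_of_le_of_ne h1 h⟩
    · refine measure_mono_null (fun x hx => ?_) (measure_empty (μ := volume))
      simp only [mem_diff, mem_inter_iff, mem_Iic, mem_Ioo, mem_empty_iff_false] at *
      rcases hx with ⟨⟨h1, h2⟩, h3⟩
      exact h3 ⟨h2.le, h1, lt_of_lt_of_le h2 ht1⟩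
  rw [Measure.restrict_congr_set hset,
    setLIntegral_congr_fun measurableSet_Ioo
      (fun x hx =>
        congrArg ENNReal.ofReal (betaM_two_density m
          ⟨hx.1, lt_of_lt_of_le hx.2 ht1⟩))]
  rw [lintegral_Ioo_of_hasDerivAt ht0 (F := G (m+1))
    (fun x _ => hasDerivAt_G m x)
    (by fun_prop)
    (fun x hx => by
      have h1 := hx.1
      have h2 : x ≤ 1 := le_trans hx.2 ht1
      have : (0:ℝ) ≤ 1 - x := by linarith
      positivity)]
  rw [G_zero, sub_zero]

lemma betaM_two_Iic_of_nonpos (m : ℕ) {t : ℝ} (ht : t ≤ 0) :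
    betaM 2 ((m:ℝ)+1) (Iic t) = 0 := by
  rw [betaM_apply _ _ measurableSet_Iic,
    show (Iic t ∩ Ioo 0 1 : Set ℝ) = ∅ by
      ext x
      simp only [mem_inter_iff, mem_Iic, mem_Ioo, mem_empty_iff_false, iff_false, not_and]
      intro h1 h2
      exfalso; linarith]
  simp

lemma betaM_two_Iic_of_one_le (m : ℕ) {t : ℝ} (ht : 1 ≤ t) :
    betaM 2 ((m:ℝ)+1) (Iic t) = 1 := by
  rw [betaM_apply _ _ measurableSet_Iic,
    show (Iic t ∩ Ioo 0 1 : Set ℝ) = Iic 1 ∩ Ioo 0 1 by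
      ext x
      simp only [mem_inter_iff, mem_Iic, mem_Ioo]
      constructor
      · rintro ⟨h1, h2, h3⟩; exact ⟨h3.le, h2, h3⟩
      · rintro ⟨h1, h2, h3⟩; exact ⟨le_trans h3.le ht, h2, h3⟩,
    ← betaM_apply _ _ measurableSet_Iic,
    betaM_two_Iic m zero_le_one le_rfl, G_one _ (by omega)]
  simp

lemma isProbabilityMeasure_betaM_two (m : ℕ) :
    IsProbabilityMeasure (betaM 2 ((m:ℝ)+1)) := by
  constructor
  rw [betaM_apply _ _ MeasurableSet.univ, univ_inter,
    show (Ioo (0:ℝ) 1) = Iic 1 ∩ Ioo 0 1 from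
      (inter_eq_right.mpr (fun x (hx : x ∈ Ioo (0:ℝ) 1) => show x ∈ Iic (1:ℝ) from le_of_lt hx.2)).symm,
    ← betaM_apply _ _ measurableSet_Iic,
    betaM_two_Iic m zero_le_one le_rfl, G_one _ (by omega)]
  simp

/-- The key convolution step. -/
lemma step (m : ℕ) :
    Measure.map (fun p : ℝ × ℝ => p.1 * p.2)
      ((betaM 2 ((m:ℝ)+1)).prod (betaM ((m:ℝ)+3) 1)) = betaM 2 ((m:ℝ)+2) := by
  have e2 : ((m:ℝ)+3) = ((m+2:ℕ):ℝ)+1 := by push_cast; ring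
  have e3 : ((m:ℝ)+2) = ((m+1:ℕ):ℝ)+1 := by push_cast; ring
  rw [e2, e3]
  haveI hμ : IsProbabilityMeasure (betaM 2 ((m:ℝ)+1)) := isProbabilityMeasure_betaM_two m
  haveI hν : IsProbabilityMeasure (betaM (((m+2:ℕ):ℝ)+1) 1) :=
    isProbabilityMeasure_betaM_nat_one (m+2)
  haveI hρ : IsProbabilityMeasure (betaM 2 (((m+1:ℕ):ℝ)+1)) :=
    isProbabilityMeasure_betaM_two (m+1)
  have hmul : Measurable fun p : ℝ × ℝ => p.1 * p.2 := measurable_fst.mul measurable_snd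
  haveI : IsProbabilityMeasure (Measure.map (fun p : ℝ × ℝ => p.1 * p.2)
      ((betaM 2 ((m:ℝ)+1)).prod (betaM (((m+2:ℕ):ℝ)+1) 1))) :=
    Measure.isProbabilityMeasure_map hmul.aemeasurable
  refine Measure.ext_of_Iic _ _ (fun t => ?_)
  rw [Measure.map_apply hmul measurableSet_Iic,
    Measure.prod_apply_symm (hmul measurableSet_Iic)]
  have hν' : betaM (((m+2:ℕ):ℝ)+1) 1 = volume.withDensity (fun x =>
      ENNReal.ofReal ((Set.Ioo (0:ℝ) 1).indicator
      (fun x => (Real.Gamma ((((m+2:ℕ):ℝ)+1) + 1) /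
        (Real.Gamma (((m+2:ℕ):ℝ)+1) * Real.Gamma 1)) *
        x ^ ((((m+2:ℕ):ℝ)+1) - 1) * (1 - x) ^ ((1:ℝ) - 1)) x)) := rfl
  rw [hν', lintegral_withDensity_eq_lintegral_mul_non_measurable volume
    (measurable_betaDensity _ _)
    (Filter.Eventually.of_forall (fun y => ENNReal.ofReal_lt_top))]
  -- rewrite integrand into indicator form
  have hind : (fun y : ℝ => (ENNReal.ofReal ((Set.Ioo (0:ℝ) 1).indicator
      (fun x => (Real.Gamma ((((m+2:ℕ):ℝ)+1) + 1) /
        (Real.Gamma (((m+2:ℕ):ℝ)+1) * Real.Gamma 1)) *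
        x ^ ((((m+2:ℕ):ℝ)+1) - 1) * (1 - x) ^ ((1:ℝ) - 1)) y)) *
      (betaM 2 ((m:ℝ)+1) ((fun x => (x, y)) ⁻¹' ((fun p : ℝ × ℝ => p.1 * p.2) ⁻¹' Iic t))))
      = (Ioo (0:ℝ) 1).indicator (fun y =>
          ENNReal.ofReal ((((m+2:ℕ):ℝ)+1) * y ^ (m+2)) *
          betaM 2 ((m:ℝ)+1) (Iic (t / y))) := by
    funext y
    by_cases hy : y ∈ Ioo (0:ℝ) 1
    · rw [Set.indicator_of_mem hy, Set.indicator_of_mem hy,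
        betaM_nat_one_density (m+2) hy]
      congr 2
      ext x
      simp only [Set.mem_preimage, Set.mem_Iic]
      exact (le_div_iff₀ hy.1).symm
    · rw [Set.indicator_of_notMem hy, Set.indicator_of_notMem hy]
      simp
  rw [show (fun y : ℝ => ((fun x => ENNReal.ofReal ((Set.Ioo (0:ℝ) 1).indicator
      (fun x => (Real.Gamma ((((m+2:ℕ):ℝ)+1) + 1) /
        (Real.Gamma (((m+2:ℕ):ℝ)+1) * Real.Gamma 1)) *
        x ^ ((((m+2:ℕ):ℝ)+1) - 1) * (1 - x) ^ ((1:ℝ) - 1)) x)) *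
      (fun y => betaM 2 ((m:ℝ)+1)
        ((fun x => (x, y)) ⁻¹' ((fun p : ℝ × ℝ => p.1 * p.2) ⁻¹' Iic t)))) y)
      = (Ioo (0:ℝ) 1).indicator (fun y =>
          ENNReal.ofReal ((((m+2:ℕ):ℝ)+1) * y ^ (m+2)) *
          betaM 2 ((m:ℝ)+1) (Iic (t / y))) from hind,
    lintegral_indicator measurableSet_Ioo]
  -- now case split on t
  rcases le_or_gt t 0 with ht | ht
  · rw [betaM_two_Iic_of_nonpos (m+1) ht]
    rw [setLIntegral_congr_fun measurableSet_Ioo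
      (fun y hy => by
        rw [betaM_two_Iic_of_nonpos m (div_nonpos_of_nonpos_of_nonneg ht hy.1.le), mul_zero])]
    simp
  rcases le_or_gt 1 t with ht1 | ht1
  · rw [betaM_two_Iic_of_one_le (m+1) ht1]
    rw [setLIntegral_congr_fun measurableSet_Ioo
      (fun y (hy : y ∈ Ioo (0:ℝ) 1) => by
        rw [betaM_two_Iic_of_one_le m (by
          rw [le_div_iff₀ hy.1, one_mul]; exact le_trans hy.2.le ht1), mul_one])]
    rw [lintegral_Ioo_of_hasDerivAt zero_le_one (F := fun y => y ^ (m+3))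
      (fun y _ => by
        have h := hasDerivAt_pow (m+3) y
        refine h.congr_deriv ?_
        push_cast; ring)
      (by fun_prop)
      (fun y hy => by have := hy.1; positivity)]
    norm_num
  -- main case 0 < t < 1
  have key : ∀ y : ℝ, y ≠ 0 →
      ((((m+2:ℕ):ℝ)+1) * y ^ (m+2)) * G (m+1) (t / y)
      = ((((m+2:ℕ):ℝ)+1) * y ^ (m+2))
        - ((((m+2:ℕ):ℝ)+1) * (y - t) ^ (m+1) * (y + (((m+1:ℕ):ℝ)) * t)) := by
    intro y hy
    simp only [G]
    push_cast
    have h1 : (1 - t / y) = (y - t) / y := by field_simp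
    rw [h1, div_pow]
    field_simp
    ring
  rw [betaM_two_Iic (m+1) ht.le ht1.le]
  rw [setLIntegral_congr_fun measurableSet_Ioo
    (fun y (hy : y ∈ Ioo (0:ℝ) 1) => show
      ENNReal.ofReal ((((m+2:ℕ):ℝ)+1) * y ^ (m+2)) * betaM 2 ((m:ℝ)+1) (Iic (t / y))
      = (Ioc 0 t).indicator (fun y => ENNReal.ofReal ((((m+2:ℕ):ℝ)+1) * y ^ (m+2))) y
        + (Ioo t 1).indicator (fun y => ENNReal.ofReal
          (((((m+2:ℕ):ℝ)+1) * y ^ (m+2))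
            - ((((m+2:ℕ):ℝ)+1) * (y - t) ^ (m+1) * (y + (((m+1:ℕ):ℝ)) * t)))) y from by
      rcases le_or_gt y t with hyt | hyt
      · have hmem : y ∈ Ioc 0 t := ⟨hy.1, hyt⟩
        have hnot : y ∉ Ioo t 1 := fun h => absurd h.1 (not_lt.2 hyt)
        rw [Set.indicator_of_mem hmem, Set.indicator_of_notMem hnot,
          betaM_two_Iic_of_one_le m (by rw [le_div_iff₀ hy.1, one_mul]; exact hyt),
          mul_one, add_zero]
      · have hmem : y ∈ Ioo t 1 := ⟨hyt, hy.2⟩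
        have hnot : y ∉ Ioc 0 t := fun h => absurd h.2 (not_le.2 hyt)
        rw [Set.indicator_of_notMem hnot, Set.indicator_of_mem hmem,
          betaM_two_Iic m (div_nonneg ht.le hy.1.le) ((div_le_one hy.1).2 hyt.le),
          ← ENNReal.ofReal_mul (by have h0 := hy.1; positivity), key y (ne_of_gt hy.1), zero_add])]
  rw [lintegral_add_right _ (Measurable.indicator (by fun_prop) measurableSet_Ioo)]
  rw [lintegral_indicator measurableSet_Ioc, lintegral_indicator measurableSet_Ioo,
    Measure.restrict_restrict measurableSet_Ioc, Measure.restrict_restrict measurableSet_Ioo,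
    show (Ioc (0:ℝ) t ∩ Ioo 0 1) = Ioc 0 t from inter_eq_left.mpr
      (fun y hy => ⟨hy.1, lt_of_le_of_lt hy.2 ht1⟩),
    show (Ioo t 1 ∩ Ioo (0:ℝ) 1) = Ioo t 1 from inter_eq_left.mpr
      (fun y hy => ⟨lt_trans ht hy.1, hy.2⟩),
    ← Measure.restrict_congr_set Ioo_ae_eq_Ioc]
  rw [lintegral_Ioo_of_hasDerivAt ht.le (F := fun y => y ^ (m+3))
    (fun y _ => by
      have h := hasDerivAt_pow (m+3) y
      refine h.congr_deriv ?_
      push_cast; ring)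
    (by fun_prop)
    (fun y hy => by have := hy.1; positivity)]
  rw [lintegral_Ioo_of_hasDerivAt ht1.le
    (F := fun y => y ^ (m+3) - (y - t) ^ (m+2) * (y + (((m+2:ℕ):ℝ)) * t))
    (fun y _ => by
      have h1 := hasDerivAt_pow (m+3) y
      have h2 := ((hasDerivAt_id y).sub_const t).pow (m+2)
      have h3 := (hasDerivAt_id y).add_const ((((m+2:ℕ):ℝ)) * t)
      have h4 := h1.sub (h2.mul h3)
      refine h4.congr_deriv ?_
      simp only [Nat.add_sub_cancel, id_eq, Pi.pow_apply]
      push_cast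
      ring)
    (by fun_prop)
    (fun y hy => by
      have hy0 : 0 < y := lt_of_lt_of_le ht hy.1
      rw [← key y (ne_of_gt hy0)]
      exact mul_nonneg (by positivity)
        (G_nonneg (div_nonneg ht.le hy0.le) ((div_le_one hy0).2 hy.1)))]
  have hF1 : (0:ℝ) ≤ t ^ (m+3) := by positivity
  have hFt : ((t:ℝ) - t) ^ (m+2) = 0 := by
    rw [sub_self]; exact zero_pow (by omega)
  have hb : (1:ℝ) - (1 - t) ^ (m+2) * (1 + (↑(m+2):ℝ) * t) - t ^ (m+3) ≥ 0 := by
    have hbern : 1 + ((m+2:ℕ):ℝ) * t ≤ (1 + t) ^ (m+2) := by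
      have := one_add_mul_le_pow (a := t) (by linarith) (m+2)
      push_cast at this ⊢
      linarith
    have h1 : (1 - t) ^ (m+2) * (1 + ((m+2:ℕ):ℝ) * t) ≤ (1 - t^2) ^ (m+2) := by
      calc (1 - t) ^ (m+2) * (1 + ((m+2:ℕ):ℝ) * t)
          ≤ (1 - t) ^ (m+2) * (1 + t) ^ (m+2) :=
            mul_le_mul_of_nonneg_left hbern (pow_nonneg (by linarith) _)
        _ = ((1 - t) * (1 + t)) ^ (m+2) := (mul_pow _ _ _).symm
        _ = (1 - t^2) ^ (m+2) := by ring_nf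
    have h2 : (1 - t^2) ^ (m+2) ≤ 1 - t^2 := by
      have := pow_le_pow_of_le_one (a := (1 - t^2 : ℝ))
        (by nlinarith [mul_nonneg (by linarith : (0:ℝ) ≤ 1 - t) (by linarith : (0:ℝ) ≤ 1 + t)])
        (by nlinarith [mul_nonneg ht.le ht.le])
        (by omega : 1 ≤ m+2)
      simpa using this
    have h3 : t ^ (m+3) ≤ t^2 :=
      pow_le_pow_of_le_one ht.le ht1.le (by omega)
    nlinarith
  rw [show ((0:ℝ))^(m+3) = 0 from zero_pow (by omega), sub_zero, hFt, zero_mul, sub_zero,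
    one_pow]
  rw [← ENNReal.ofReal_add hF1 (by linarith)]
  congr 1
  simp only [G]
  push_cast
  ring

lemma ae_eq_biInter {Ω : Type*} [MeasurableSpace Ω] {P : Measure Ω} {f g : ℕ → Set Ω}
    (S : Finset ℕ) (h : ∀ i ∈ S, f i =ᵐ[P] g i) :
    ((⋂ i ∈ S, f i : Set Ω)) =ᵐ[P] (⋂ i ∈ S, g i) := by
  classical
  induction S using Finset.induction_on with
  | empty => simp
  | @insert a s ha ih =>
    simp only [Finset.set_biInter_insert]
    exact (h a (Finset.mem_insert_self a s)).inter
      (ih (fun i hi => h i (Finset.mem_insert_of_mem hi)))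

/-- Transfer of `iIndepFun` along a.e. equality / constants. -/
lemma iIndepFun_of_ae_eq_or_const {Ω : Type*} [MeasurableSpace Ω] {P : Measure Ω}
    [IsProbabilityMeasure P] {X Y : ℕ → Ω → ℝ}
    (h : iIndepFun X P)
    (hXY : ∀ j, Y j =ᵐ[P] X j ∨ ∃ c, Y j = fun _ => c) :
    iIndepFun Y P := by
  classical
  rw [iIndepFun_iff_measure_inter_preimage_eq_mul] at h ⊢
  intro S sets hsets
  by_cases hE : ∃ i ∈ S, Y i ⁻¹' sets i = ∅
  · obtain ⟨i, hiS, hie⟩ := hE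
    have hL : P (⋂ i ∈ (S : Finset ℕ), Y i ⁻¹' sets i) = 0 := by
      apply measure_mono_null (Set.biInter_subset_of_mem (by exact_mod_cast hiS))
      rw [hie]; exact measure_empty
    rw [hL, Finset.prod_eq_zero hiS (by rw [hie]; exact measure_empty)]
  push_neg at hE
  set S' := S.filter (fun i => Y i ⁻¹' sets i ≠ Set.univ) with hS'
  have hsub : S' ⊆ S := Finset.filter_subset _ _
  have haeq : ∀ i ∈ S', (Y i ⁻¹' sets i : Set Ω) =ᵐ[P] (X i ⁻¹' sets i : Set Ω) := by
    intro i hi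
    rcases hXY i with hae' | ⟨c, hc⟩
    · filter_upwards [hae'] with ω hω
      change (Y i ω ∈ sets i) = (X i ω ∈ sets i)
      rw [hω]
    · rw [Finset.mem_filter] at hi
      rcases em (c ∈ sets i) with hc' | hc'
      · exact absurd (by rw [hc]; ext ω; simp [hc']) hi.2
      · obtain ⟨ω, hω⟩ := hE i hi.1
        rw [hc] at hω
        exact absurd hω hc'
  have hIY : (⋂ i ∈ S, Y i ⁻¹' sets i) = (⋂ i ∈ S', Y i ⁻¹' sets i) := by
    apply Set.Subset.antisymm
    · intro ω hω
      simp only [Set.mem_iInter] at *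
      exact fun i hi => hω i (hsub hi)
    · intro ω hω
      simp only [Set.mem_iInter] at *
      intro i hiS
      by_cases hu : Y i ⁻¹' sets i = Set.univ
      · rw [hu]; trivial
      · exact hω i (Finset.mem_filter.2 ⟨hiS, hu⟩)
  have hIae : (⋂ i ∈ S', Y i ⁻¹' sets i : Set Ω) =ᵐ[P] (⋂ i ∈ S', X i ⁻¹' sets i) :=
    ae_eq_biInter S' haeq
  rw [hIY, measure_congr hIae, h S' (fun i hi => hsets i (hsub hi))]
  have hpeq : ∀ i ∈ S', P (X i ⁻¹' sets i) = P (Y i ⁻¹' sets i) :=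
    fun i hi => (measure_congr (haeq i hi)).symm
  rw [Finset.prod_congr rfl hpeq]
  exact Finset.prod_subset hsub (fun i hiS hiS' => by
    have hu : Y i ⁻¹' sets i = Set.univ := by
      by_contra hne; exact hiS' (Finset.mem_filter.2 ⟨hiS, hne⟩)
    rw [hu]; exact measure_univ)

end BetaAux

/-- The product of independent Beta random variables `β_{j,1}`, `j = 2, …, N`,
is Beta distributed with parameters `(2, N-1)`. -/
theorem prod_beta_eq_beta {Ω : Type*} [MeasurableSpace Ω] (P : Measure Ω) [IsProbabilityMeasure P]
    (N : ℕ) (hN : 2 ≤ N) (X : ℕ → Ω → ℝ)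
    (hindep : iIndepFun X P)
    (hX : ∀ j ∈ Finset.Icc 2 N, Measure.map (X j) P = betaM (j : ℝ) 1) :
    Measure.map (fun ω => ∏ j ∈ Finset.Icc 2 N, X j ω) P = betaM 2 ((N : ℝ) - 1) := by
  classical
  -- a.e. measurability of the relevant `X j`
  have hae : ∀ j ∈ Finset.Icc 2 N, AEMeasurable (X j) P := by
    intro j hj
    by_contra h
    have h0 := hX j hj
    rw [Measure.map_of_not_aemeasurable h] at h0
    have hj2 : 2 ≤ j := (Finset.mem_Icc.1 hj).1
    obtain ⟨m, rfl⟩ : ∃ m, j = m + 1 := ⟨j - 1, by omega⟩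
    have : IsProbabilityMeasure (betaM ((m:ℝ)+1) 1) := by
      have := BetaAux.isProbabilityMeasure_betaM_nat_one m
      simpa using this
    have h1 : (betaM (((m+1:ℕ)):ℝ) 1) Set.univ = 1 := by
      push_cast
      exact this.measure_univ
    rw [← h0] at h1
    simp at h1
  -- a measurable modification
  set Y : ℕ → Ω → ℝ := fun j =>
    if h : AEMeasurable (X j) P then h.mk (X j) else fun _ => 1 with hYdef
  have hYmeas : ∀ j, Measurable (Y j) := by
    intro j
    simp only [hYdef]
    split_ifs with h
    exacts [h.measurable_mk, measurable_const]
  have hYX : ∀ j ∈ Finset.Icc 2 N, Y j =ᵐ[P] X j := by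
    intro j hj
    have h := hae j hj
    simp only [hYdef, dif_pos h]
    exact h.ae_eq_mk.symm
  have hYindep : iIndepFun Y P := by
    apply BetaAux.iIndepFun_of_ae_eq_or_const hindep
    intro j
    by_cases h : AEMeasurable (X j) P
    · left; simp only [hYdef, dif_pos h]; exact h.ae_eq_mk.symm
    · right; exact ⟨1, by simp [hYdef, h]⟩
  have hYlaw : ∀ j ∈ Finset.Icc 2 N, Measure.map (Y j) P = betaM (j:ℝ) 1 := by
    intro j hj
    rw [Measure.map_congr (hYX j hj)]
    exact hX j hj
  -- main induction
  have key : ∀ n, 2 ≤ n → n ≤ N →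
      Measure.map (fun ω => ∏ j ∈ Finset.Icc 2 n, Y j ω) P = betaM 2 ((n:ℝ) - 1) := by
    intro n hn2 hnN
    induction n, hn2 using Nat.le_induction with
    | base =>
      have : Finset.Icc 2 2 = {2} := Finset.Icc_self 2
      simp only [this, Finset.prod_singleton]
      rw [hYlaw 2 (by simp [Finset.mem_Icc]; omega)]
      norm_num
    | succ n hn IH =>
      have hnN' : n ≤ N := by omega
      have IH' := IH hnN'
      -- split off the last factor
      have hsplit : (fun ω => ∏ j ∈ Finset.Icc 2 (n+1), Y j ω)
          = fun ω => (∏ j ∈ Finset.Icc 2 n, Y j ω) * Y (n+1) ω := by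
        funext ω
        rw [← Finset.prod_Icc_succ_top (by omega : 2 ≤ n + 1)]
      rw [hsplit]
      -- independence of the partial product and the next factor
      have hdisj : Disjoint (Finset.Icc 2 n) ({n+1} : Finset ℕ) := by
        simp [Finset.disjoint_singleton_right, Finset.mem_Icc]
      have hI := (hYindep.indepFun_finset (Finset.Icc 2 n) {n+1} hdisj hYmeas).comp
        (φ := fun v : (Finset.Icc 2 n : Finset ℕ) → ℝ => ∏ i, v i)
        (ψ := fun v : (({n+1} : Finset ℕ) : Finset ℕ) → ℝ => v ⟨n+1, by simp⟩)
        (_mγ' := (inferInstance : MeasurableSpace ℝ))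
        (by fun_prop) (measurable_pi_apply _)
      have hI' : IndepFun (fun ω => ∏ j ∈ Finset.Icc 2 n, Y j ω) (Y (n+1)) P := by
        convert hI using 1
        funext ω
        simp only [Function.comp]
        exact (Finset.prod_coe_sort _ _).symm
        rfl
      have hf : AEMeasurable (fun ω => ∏ j ∈ Finset.Icc 2 n, Y j ω) P :=
        (Finset.measurable_prod _ (fun j _ => hYmeas j)).aemeasurable
      have hg : AEMeasurable (Y (n+1)) P := (hYmeas (n+1)).aemeasurable
      have hmap := (ProbabilityTheory.indepFun_iff_map_prod_eq_prod_map_map hf hg).1 hI'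
      have hmul : Measurable fun p : ℝ × ℝ => p.1 * p.2 :=
        measurable_fst.mul measurable_snd
      have : Measure.map (fun ω => (∏ j ∈ Finset.Icc 2 n, Y j ω) * Y (n+1) ω) P
          = Measure.map (fun p : ℝ × ℝ => p.1 * p.2)
            (Measure.map (fun ω => ((∏ j ∈ Finset.Icc 2 n, Y j ω), Y (n+1) ω)) P) := by
        rw [Measure.map_map hmul (by exact (Finset.measurable_prod _
          (fun j _ => hYmeas j)).prodMk (hYmeas (n+1)))]
        rfl
      rw [this, hmap, IH', hYlaw (n+1) (by simp [Finset.mem_Icc]; omega)]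
      obtain ⟨m, rfl⟩ : ∃ m, n = m + 2 := ⟨n - 2, by omega⟩
      have hc1 : ((m + 2 : ℕ) : ℝ) - 1 = (m:ℝ) + 1 := by push_cast; ring
      have hc2 : ((m + 2 + 1 : ℕ) : ℝ) = (m:ℝ) + 3 := by push_cast; ring
      have hc3 : ((m + 2 + 1 : ℕ) : ℝ) - 1 = (m:ℝ) + 2 := by push_cast; ring
      rw [hc1, hc3, hc2]
      exact BetaAux.step m
  have hprodeq : (fun ω => ∏ j ∈ Finset.Icc 2 N, X j ω)
      =ᵐ[P] (fun ω => ∏ j ∈ Finset.Icc 2 N, Y j ω) := by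
    have : ∀ᵐ ω ∂P, ∀ j ∈ Finset.Icc 2 N, Y j ω = X j ω := by
      rw [Filter.eventually_all_finset]
      exact hYX
    filter_upwards [this] with ω hω
    exact (Finset.prod_congr rfl hω).symm
  rw [Measure.map_congr hprodeq]
  exact key N hN le_rfl
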